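/- For every y ≥ 1, one has 2 y^{9/2} (ϑ₂'(y))² ϑ₂(y) − 2 y^{9/2} ϑ₂''(y) ϑ₂(y)² − 2 y^{11/2} (ϑ₂'(y))³ + 3 y^{11/2} ϑ₂''(y) ϑ₂'(y) ϑ₂(y) − y^{11/2} ϑ₂'''(y) ϑ₂(y)² > 0. -/

import Mathlib

open Real

/-- The Jacobi theta function ϑ₂, defined for real `y` by
`ϑ₂(y) = ∑_{n ∈ ℤ} e^{−π y (n + 1/2)²}`. -/
noncomputable def theta2 (y : ℝ) : ℝ :=
  ∑' n : ℤ, Real.exp (-Real.pi * y * ((n : ℝ) + 1/2) ^ 2)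

namespace T2test

noncomputable def cz (n : ℤ) : ℝ := ((n : ℝ) + 1/2) ^ 2

lemma cz_nonneg (n : ℤ) : 0 ≤ cz n := sq_nonneg _

lemma cz_neg (n : ℕ) : cz (-((n : ℤ) + 1)) = cz n := by
  simp only [cz]; push_cast; ring

lemma pow_le_factorial_mul_exp (m : ℕ) {x : ℝ} (hx : 0 ≤ x) :
    x ^ m ≤ m.factorial * Real.exp x := by
  have h := Real.sum_le_exp_of_nonneg hx (m + 1)
  have h2 : x ^ m / m.factorial ≤ ∑ i ∈ Finset.range (m + 1), x ^ i / i.factorial :=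
    Finset.single_le_sum (f := fun i => x ^ i / (i.factorial : ℝ))
      (fun i _ => by positivity) (Finset.self_mem_range_succ m)
  have h3 : x ^ m / m.factorial ≤ Real.exp x := h2.trans h
  have hm : (0:ℝ) < m.factorial := by positivity
  calc x ^ m = m.factorial * (x ^ m / m.factorial) := by field_simp
  _ ≤ m.factorial * Real.exp x := by
      exact mul_le_mul_of_nonneg_left h3 hm.le

lemma cz_ge_nat (n : ℕ) : (n : ℝ) ≤ cz n := by
  simp only [cz]; push_cast; nlinarith [sq_nonneg (n:ℝ)]

lemma summable_exp_quarter : Summable (fun n : ℤ => Real.exp (-(π/4) * cz n)) := by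
  have key : Summable (fun n : ℕ => Real.exp (-(π/4) * cz n)) := by
    have hgeo : Summable (fun n : ℕ => Real.exp (-(π/4)) ^ n) :=
      summable_geometric_of_lt_one (Real.exp_pos _).le
        (Real.exp_lt_one_iff.mpr (by nlinarith [Real.pi_pos]))
    refine Summable.of_nonneg_of_le (fun n => (Real.exp_pos _).le) (fun n => ?_) hgeo
    calc Real.exp (-(π/4) * cz n) ≤ Real.exp ((n:ℝ) * -(π/4)) := by
          apply Real.exp_le_exp.mpr
          nlinarith [cz_ge_nat n, pi_pos]
    _ = Real.exp (-(π/4)) ^ n := Real.exp_nat_mul _ n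
  refine Summable.of_nat_of_neg_add_one key ?_
  have h2 : (fun n : ℕ => Real.exp (-(π/4) * cz (-((n:ℤ) + 1)))) =
      (fun n : ℕ => Real.exp (-(π/4) * cz n)) := by
    funext n; rw [cz_neg]
  rw [h2]; exact key

lemma ubound (k : ℕ) (n : ℤ) :
    (π * cz n) ^ k * Real.exp (-(π/2) * cz n) ≤
      ((k.factorial : ℝ) * 4 ^ k) * Real.exp (-(π/4) * cz n) := by
  have h0 : (0:ℝ) ≤ π/4 * cz n := mul_nonneg (by positivity) (cz_nonneg n)
  have h1 : (π/4 * cz n) ^ k ≤ k.factorial * Real.exp (π/4 * cz n) :=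
    pow_le_factorial_mul_exp k h0
  have h2 : (π * cz n) ^ k = 4 ^ k * (π/4 * cz n) ^ k := by
    rw [← mul_pow]; ring_nf
  have h3 : (π * cz n) ^ k ≤ (k.factorial : ℝ) * 4 ^ k * Real.exp (π/4 * cz n) := by
    rw [h2]
    calc (4:ℝ) ^ k * (π/4 * cz n) ^ k ≤ 4 ^ k * (k.factorial * Real.exp (π/4 * cz n)) := by
          apply mul_le_mul_of_nonneg_left h1 (by positivity)
    _ = (k.factorial : ℝ) * 4 ^ k * Real.exp (π/4 * cz n) := by ring
  calc (π * cz n) ^ k * Real.exp (-(π/2) * cz n)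
      ≤ ((k.factorial : ℝ) * 4 ^ k * Real.exp (π/4 * cz n)) * Real.exp (-(π/2) * cz n) :=
        mul_le_mul_of_nonneg_right h3 (Real.exp_pos _).le
  _ = ((k.factorial : ℝ) * 4 ^ k) * Real.exp (π/4 * cz n + -(π/2) * cz n) := by
        rw [Real.exp_add]; ring
  _ = ((k.factorial : ℝ) * 4 ^ k) * Real.exp (-(π/4) * cz n) := by ring_nf

lemma summable_u (k : ℕ) :
    Summable (fun n : ℤ => (π * cz n) ^ k * Real.exp (-(π/2) * cz n)) := by
  refine Summable.of_nonneg_of_le (fun n => mul_nonneg (pow_nonneg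
      (mul_nonneg Real.pi_pos.le (cz_nonneg n)) k) (Real.exp_pos _).le)
    (fun n => ubound k n)
    (summable_exp_quarter.mul_left _)

lemma summable_G_term (k : ℕ) {y : ℝ} (hy : 1/2 ≤ y) :
    Summable (fun n : ℤ => (-(π * cz n)) ^ k * Real.exp (-π * y * cz n)) := by
  refine Summable.of_norm_bounded (summable_u k) (fun n => ?_)
  rw [norm_mul, norm_pow, norm_neg, Real.norm_eq_abs, Real.norm_eq_abs,
    abs_of_nonneg (mul_nonneg Real.pi_pos.le (cz_nonneg n)), Real.abs_exp]
  apply mul_le_mul_of_nonneg_left _ (pow_nonneg (mul_nonneg Real.pi_pos.le (cz_nonneg n)) k)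
  apply Real.exp_le_exp.mpr
  nlinarith [mul_nonneg (mul_nonneg (by linarith : (0:ℝ) ≤ y - 1/2) Real.pi_pos.le) (cz_nonneg n)]

noncomputable def G (k : ℕ) (y : ℝ) : ℝ :=
  ∑' n : ℤ, (-(π * cz n)) ^ k * Real.exp (-π * y * cz n)

lemma hasDerivAt_G (k : ℕ) {y : ℝ} (hy : 1/2 < y) :
    HasDerivAt (G k) (G (k+1) y) y := by
  refine hasDerivAt_tsum_of_isPreconnected (summable_u (k+1)) isOpen_Ioi
    isPreconnected_Ioi
    (g := fun n z => (-(π * cz n)) ^ k * Real.exp (-π * z * cz n))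
    (g' := fun n z => (-(π * cz n)) ^ (k+1) * Real.exp (-π * z * cz n))
    (t := Set.Ioi (1/2 : ℝ)) (y₀ := 1) ?_ ?_ (by norm_num) ?_ hy
  · intro n z hz
    have h1 : HasDerivAt (fun w : ℝ => -π * w * cz n) (-π * cz n) z := by
      simpa using ((hasDerivAt_id z).const_mul (-π)).mul_const (cz n)
    have h2 := (h1.exp).const_mul ((-(π * cz n)) ^ k)
    exact h2.congr_deriv (by rw [pow_succ]; ring)
  · intro n z hz
    rw [norm_mul, norm_pow, norm_neg, Real.norm_eq_abs, Real.norm_eq_abs,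
      abs_of_nonneg (mul_nonneg Real.pi_pos.le (cz_nonneg n)), Real.abs_exp]
    apply mul_le_mul_of_nonneg_left _ (pow_nonneg (mul_nonneg Real.pi_pos.le (cz_nonneg n)) (k+1))
    apply Real.exp_le_exp.mpr
    have hz' : (1:ℝ)/2 < z := hz
    nlinarith [mul_nonneg (mul_nonneg (by linarith : (0:ℝ) ≤ z - 1/2) Real.pi_pos.le) (cz_nonneg n)]
  · exact summable_G_term k (by norm_num)

lemma theta2_eq_G : theta2 = G 0 := by
  funext y
  simp only [theta2, G, pow_zero, one_mul, cz]

lemma deriv_theta2 {y : ℝ} (hy : 1/2 < y) : deriv theta2 y = G 1 y := by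
  rw [theta2_eq_G]; exact (hasDerivAt_G 0 hy).deriv

lemma iteratedDeriv_two {y : ℝ} (hy : 1/2 < y) : iteratedDeriv 2 theta2 y = G 2 y := by
  rw [iteratedDeriv_succ, iteratedDeriv_one]
  have h : deriv theta2 =ᶠ[nhds y] G 1 := by
    filter_upwards [Ioi_mem_nhds hy] with z hz
    exact deriv_theta2 hz
  rw [h.deriv_eq]
  exact (hasDerivAt_G 1 hy).deriv

lemma iteratedDeriv_three {y : ℝ} (hy : 1/2 < y) : iteratedDeriv 3 theta2 y = G 3 y := by
  rw [iteratedDeriv_succ]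
  have h : iteratedDeriv 2 theta2 =ᶠ[nhds y] G 2 := by
    filter_upwards [Ioi_mem_nhds hy] with z hz
    exact iteratedDeriv_two hz
  rw [h.deriv_eq]
  exact (hasDerivAt_G 2 hy).deriv

set_option maxHeartbeats 1000000 in
lemma G_eq_two_mul (k : ℕ) {y : ℝ} (hy : 1 ≤ y) :
    G k y = 2 * ∑' n : ℕ, (-(π * cz (n : ℤ))) ^ k * Real.exp (-π * y * cz (n : ℤ)) := by
  have hs := summable_G_term k (by linarith : (1:ℝ)/2 ≤ y)
  have h1 : Summable (fun n : ℕ => (-(π * cz (n:ℤ))) ^ k * Real.exp (-π * y * cz (n:ℤ))) :=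
    (summable_int_iff_summable_nat_and_neg_add_zero.mp hs).1
  have h2 : (fun n : ℕ => (-(π * cz (-((n:ℤ)+1)))) ^ k * Real.exp (-π * y * cz (-((n:ℤ)+1)))) =
      (fun n : ℕ => (-(π * cz (n:ℤ))) ^ k * Real.exp (-π * y * cz (n:ℤ))) := by
    funext n; rw [cz_neg]
  rw [G, tsum_of_nat_of_neg_add_one h1 (by rw [h2]; exact h1)]
  rw [h2]
  ring

lemma three_pow_bound : ∀ n : ℕ, ((n:ℝ)^2 + n + 1) ≤ 3 ^ (n+1) := by
  intro n
  induction n with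
  | zero => norm_num
  | succ m ih =>
    have h3 : (3:ℝ) ^ (m+1+1) = 3 * 3 ^ (m+1) := by rw [pow_succ]; ring
    push_cast
    push_cast at ih
    nlinarith [ih, sq_nonneg ((m:ℝ))]

lemma exp_le_geom {y : ℝ} (hy : 1 ≤ y) (n : ℕ) :
    Real.exp (-π * y * ((n:ℝ)^2 + n)) ≤ Real.exp (-(2*π*y)) ^ n := by
  have hsq : (n:ℝ) ≤ (n:ℝ)^2 := by
    have : n ≤ n^2 := Nat.le_self_pow two_ne_zero n
    exact_mod_cast this
  calc Real.exp (-π * y * ((n:ℝ)^2 + n)) ≤ Real.exp ((n:ℝ) * -(2*π*y)) := by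
        apply Real.exp_le_exp.mpr
        nlinarith [mul_nonneg (mul_nonneg Real.pi_pos.le (by linarith : (0:ℝ) ≤ y))
          (by linarith : (0:ℝ) ≤ (n:ℝ)^2 - n)]
  _ = Real.exp (-(2*π*y)) ^ n := Real.exp_nat_mul _ n

lemma summable_b (j : ℕ) (hj : j ≤ 3) {y : ℝ} (hy : 1 ≤ y) :
    Summable (fun n : ℕ => ((n:ℝ)^2 + n)^j * Real.exp (-π * y * ((n:ℝ)^2 + n))) := by
  have hr : (27:ℝ) * Real.exp (-(2*π*y)) < 1 := by
    have h1 : Real.exp (-(2*π*y)) ≤ Real.exp (-6) := by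
      apply Real.exp_le_exp.mpr
      nlinarith [Real.pi_gt_three, mul_pos Real.pi_pos (by linarith : (0:ℝ) < y),
        mul_le_mul_of_nonneg_left hy (by positivity : (0:ℝ) ≤ 2*π)]
    have h2 : Real.exp (-6) < 1/27 := by
      rw [Real.exp_neg]
      rw [inv_lt_comm₀ (Real.exp_pos _) (by norm_num)]
      have : (27:ℝ) < 2^6 := by norm_num
      have h6 : (2:ℝ)^6 ≤ Real.exp 6 := by
        have := Real.exp_one_gt_d9
        calc (2:ℝ)^6 ≤ Real.exp 1 ^ 6 := by
              apply pow_le_pow_left₀ (by norm_num)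
              linarith
            _ = Real.exp 6 := by
              rw [← Real.exp_nat_mul]; norm_num
      linarith
    nlinarith [Real.exp_pos (-(2*π*y))]
  have hgeo : Summable (fun n : ℕ => (27:ℝ) * (27 * Real.exp (-(2*π*y)))^n) :=
    (summable_geometric_of_lt_one (by positivity) hr).mul_left _
  refine Summable.of_nonneg_of_le (fun n => by positivity) (fun n => ?_) hgeo
  set b : ℝ := (n:ℝ)^2 + n with hb
  have hb0 : (0:ℝ) ≤ b := by positivity
  have h1 : b^j ≤ (b+1)^3 := by
    calc b^j ≤ (b+1)^j := pow_le_pow_left₀ hb0 (by linarith) j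
    _ ≤ (b+1)^3 := pow_le_pow_right₀ (by linarith) hj
  have h2 : (b+1)^3 ≤ (27:ℝ)^(n+1) := by
    have h2a : b + 1 ≤ 3^(n+1) := by rw [hb]; exact three_pow_bound n
    calc (b+1)^3 ≤ ((3:ℝ)^(n+1))^3 := pow_le_pow_left₀ (by linarith) h2a 3
    _ = (27:ℝ)^(n+1) := by rw [← pow_mul, mul_comm (n+1) 3, pow_mul]; norm_num
  have h3 := exp_le_geom hy n
  calc b^j * Real.exp (-π * y * b)
      ≤ (27:ℝ)^(n+1) * Real.exp (-(2*π*y)) ^ n := by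
        apply mul_le_mul (h1.trans h2) h3 (Real.exp_pos _).le (by positivity)
  _ = 27 * (27 * Real.exp (-(2*π*y)))^n := by rw [mul_pow, pow_succ]; ring

noncomputable def Sg (j : ℕ) (y : ℝ) : ℝ :=
  ∑' n : ℕ, ((n:ℝ)^2 + n)^j * Real.exp (-π * y * ((n:ℝ)^2 + n))

lemma cz_nat (n : ℕ) : cz (n : ℤ) = ((n:ℝ)^2 + n) + 1/4 := by
  simp only [cz]; push_cast; ring

lemma exp_cz_nat {y : ℝ} (n : ℕ) :
    Real.exp (-π * y * cz (n:ℤ)) =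
      Real.exp (-π * y / 4) * Real.exp (-π * y * ((n:ℝ)^2 + n)) := by
  rw [cz_nat, ← Real.exp_add]
  congr 1
  ring

lemma natSum0 {y : ℝ} (hy : 1 ≤ y) :
    (∑' n : ℕ, (-(π * cz (n:ℤ))) ^ 0 * Real.exp (-π * y * cz (n:ℤ)))
      = Real.exp (-π * y / 4) * Sg 0 y := by
  rw [show Real.exp (-π*y/4) * Sg 0 y = ∑' n : ℕ,
      Real.exp (-π*y/4) * (((n:ℝ)^2 + n)^0 * Real.exp (-π * y * ((n:ℝ)^2 + n)))
    from (tsum_mul_left).symm]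
  apply tsum_congr
  intro n
  rw [exp_cz_nat]
  ring

lemma natSum1 {y : ℝ} (hy : 1 ≤ y) :
    (∑' n : ℕ, (-(π * cz (n:ℤ))) ^ 1 * Real.exp (-π * y * cz (n:ℤ)))
      = (-π) * Real.exp (-π * y / 4) * (Sg 1 y + (1/4) * Sg 0 y) := by
  have hs1 := (summable_b 1 (by norm_num) hy).mul_left ((-π) * Real.exp (-π*y/4))
  have hs0 := (summable_b 0 (by norm_num) hy).mul_left ((-π) * Real.exp (-π*y/4) * (1/4))
  have key : (∑' n : ℕ, (-(π * cz (n:ℤ))) ^ 1 * Real.exp (-π * y * cz (n:ℤ)))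
      = ∑' n : ℕ, (((-π) * Real.exp (-π*y/4)) * (((n:ℝ)^2+n)^1 * Real.exp (-π * y * ((n:ℝ)^2 + n)))
          + ((-π) * Real.exp (-π*y/4) * (1/4)) * (((n:ℝ)^2+n)^0 * Real.exp (-π * y * ((n:ℝ)^2 + n)))) := by
    apply tsum_congr
    intro n
    rw [exp_cz_nat, cz_nat]
    ring
  rw [key, Summable.tsum_add hs1 hs0, tsum_mul_left, tsum_mul_left]
  unfold Sg
  ring

lemma natSum2 {y : ℝ} (hy : 1 ≤ y) :
    (∑' n : ℕ, (-(π * cz (n:ℤ))) ^ 2 * Real.exp (-π * y * cz (n:ℤ)))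
      = π^2 * Real.exp (-π * y / 4) *
        (Sg 2 y + (1/2) * Sg 1 y + (1/16) * Sg 0 y) := by
  have hs2 := (summable_b 2 (by norm_num) hy).mul_left (π^2 * Real.exp (-π*y/4))
  have hs1 := (summable_b 1 (by norm_num) hy).mul_left (π^2 * Real.exp (-π*y/4) * (1/2))
  have hs0 := (summable_b 0 (by norm_num) hy).mul_left (π^2 * Real.exp (-π*y/4) * (1/16))
  have key : (∑' n : ℕ, (-(π * cz (n:ℤ))) ^ 2 * Real.exp (-π * y * cz (n:ℤ)))
      = ∑' n : ℕ, ((π^2 * Real.exp (-π*y/4)) * (((n:ℝ)^2+n)^2 * Real.exp (-π * y * ((n:ℝ)^2 + n)))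
          + ((π^2 * Real.exp (-π*y/4) * (1/2)) * (((n:ℝ)^2+n)^1 * Real.exp (-π * y * ((n:ℝ)^2 + n)))
          + (π^2 * Real.exp (-π*y/4) * (1/16)) * (((n:ℝ)^2+n)^0 * Real.exp (-π * y * ((n:ℝ)^2 + n))))) := by
    apply tsum_congr
    intro n
    rw [exp_cz_nat, cz_nat]
    ring
  rw [key, Summable.tsum_add hs2 (hs1.add hs0), Summable.tsum_add hs1 hs0,
    tsum_mul_left, tsum_mul_left, tsum_mul_left]
  unfold Sg
  ring

lemma natSum3 {y : ℝ} (hy : 1 ≤ y) :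
    (∑' n : ℕ, (-(π * cz (n:ℤ))) ^ 3 * Real.exp (-π * y * cz (n:ℤ)))
      = (-π^3) * Real.exp (-π * y / 4) *
        (Sg 3 y + (3/4) * Sg 2 y + (3/16) * Sg 1 y + (1/64) * Sg 0 y) := by
  have hs3 := (summable_b 3 (by norm_num) hy).mul_left ((-π^3) * Real.exp (-π*y/4))
  have hs2 := (summable_b 2 (by norm_num) hy).mul_left ((-π^3) * Real.exp (-π*y/4) * (3/4))
  have hs1 := (summable_b 1 (by norm_num) hy).mul_left ((-π^3) * Real.exp (-π*y/4) * (3/16))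
  have hs0 := (summable_b 0 (by norm_num) hy).mul_left ((-π^3) * Real.exp (-π*y/4) * (1/64))
  have key : (∑' n : ℕ, (-(π * cz (n:ℤ))) ^ 3 * Real.exp (-π * y * cz (n:ℤ)))
      = ∑' n : ℕ, (((-π^3) * Real.exp (-π*y/4)) * (((n:ℝ)^2+n)^3 * Real.exp (-π * y * ((n:ℝ)^2 + n)))
          + (((-π^3) * Real.exp (-π*y/4) * (3/4)) * (((n:ℝ)^2+n)^2 * Real.exp (-π * y * ((n:ℝ)^2 + n)))
          + (((-π^3) * Real.exp (-π*y/4) * (3/16)) * (((n:ℝ)^2+n)^1 * Real.exp (-π * y * ((n:ℝ)^2 + n)))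
          + ((-π^3) * Real.exp (-π*y/4) * (1/64)) * (((n:ℝ)^2+n)^0 * Real.exp (-π * y * ((n:ℝ)^2 + n)))))) := by
    apply tsum_congr
    intro n
    rw [exp_cz_nat, cz_nat]
    ring
  rw [key, Summable.tsum_add hs3 (hs2.add (hs1.add hs0)), Summable.tsum_add hs2 (hs1.add hs0), Summable.tsum_add hs1 hs0,
    tsum_mul_left, tsum_mul_left, tsum_mul_left, tsum_mul_left]
  unfold Sg
  ring

lemma six_pow_le (m : ℕ) (hm : 2 ≤ m) : m^6 ≤ 9^m := by
  induction m with
  | zero => omega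
  | succ k ih =>
    rcases Nat.lt_or_ge k 3 with hk | hk
    · interval_cases k <;> norm_num
    · have ihk := ih (by omega)
      have h1 : (k+1)^2 ≤ 2*k^2 := by nlinarith
      have h2 : (k+1)^6 ≤ 8*(k^2)^3 := by
        calc (k+1)^6 = ((k+1)^2)^3 := by ring
        _ ≤ (2*k^2)^3 := Nat.pow_le_pow_left h1 3
        _ = 8*(k^2)^3 := by ring
      calc (k+1)^6 ≤ 8*(k^2)^3 := h2
      _ = 8 * k^6 := by ring
      _ ≤ 9 * 9^k := by
          have h8 : 8 * k^6 ≤ 8 * 9^k := Nat.mul_le_mul_left 8 ihk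
          have h9 : 8 * 9^k ≤ 9 * 9^k := Nat.mul_le_mul_right (9^k) (by norm_num)
          omega
      _ = 9^(k+1) := by rw [pow_succ]; ring

lemma q_le_20 {y : ℝ} (hy : 1 ≤ y) : Real.exp (-(π*y)) ≤ 1/20 := by
  have h1 : Real.exp (-(π*y)) ≤ Real.exp (-3) := by
    apply Real.exp_le_exp.mpr
    nlinarith [Real.pi_gt_three]
  have h2 : (20:ℝ) ≤ Real.exp 3 := by
    have he := Real.exp_one_gt_d9
    have h3 : Real.exp 3 = Real.exp 1 ^ 3 := by
      rw [← Real.exp_nat_mul]; norm_num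
    rw [h3]
    have hcube : (2.7182818283:ℝ)^3 ≤ Real.exp 1 ^ 3 :=
      pow_le_pow_left₀ (by norm_num) he.le 3
    nlinarith [hcube]
  have h4 : Real.exp (-3) = (Real.exp 3)⁻¹ := by rw [← Real.exp_neg]
  rw [h4] at h1
  have : (Real.exp 3)⁻¹ ≤ 1/20 := by
    rw [inv_le_comm₀ (Real.exp_pos _) (by norm_num)]
    linarith
  linarith

lemma exp_b_eq_qpow {y : ℝ} (m : ℕ) :
    Real.exp (-π * y * ((m:ℝ)^2 + m)) = Real.exp (-(π*y)) ^ (m^2 + m) := by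
  rw [← Real.exp_nat_mul]
  congr 1
  push_cast
  ring

set_option maxHeartbeats 1000000 in
lemma Sg_decomp (j : ℕ) (hj : j ≤ 3) {y : ℝ} (hy : 1 ≤ y) :
    ∃ T : ℝ, Sg j y = (0:ℝ)^j + T ∧
      2^j * Real.exp (-(π*y))^2 ≤ T ∧
      T ≤ 2^j * Real.exp (-(π*y))^2 + 650 * Real.exp (-(π*y))^6 := by
  set q : ℝ := Real.exp (-(π*y)) with hqdef
  have hq0 : 0 < q := Real.exp_pos _
  have hq20 : q ≤ 1/20 := q_le_20 hy
  have hq1 : q ≤ 1 := by linarith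
  have hq4 : q^4 ≤ 1/160000 := by
    calc q^4 ≤ (1/20)^4 := pow_le_pow_left₀ hq0.le hq20 4
    _ = 1/160000 := by norm_num
  have hsum := summable_b j hj hy
  set f : ℕ → ℝ := fun n => ((n:ℝ)^2 + n)^j * Real.exp (-π * y * ((n:ℝ)^2 + n)) with hf
  have hsum1 : Summable (fun n => f (n+1)) := (summable_nat_add_iff 1).mpr hsum
  have hsum2 : Summable (fun n => f (n+1+1)) := (summable_nat_add_iff 1).mpr hsum1
  have hf0 : f 0 = (0:ℝ)^j := by
    simp only [hf]
    norm_num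
  have hf1 : f 1 = 2^j * q^2 := by
    simp only [hf, hqdef]
    rw [exp_b_eq_qpow 1]
    norm_num
  have hfnn : ∀ n, 0 ≤ f n := by
    intro n
    simp only [hf]
    positivity
  refine ⟨∑' n, f (n+1), ?_, ?_, ?_⟩
  · rw [Sg, Summable.tsum_eq_zero_add hsum, hf0]
  · have := Summable.le_tsum hsum1 0 (fun i _ => hfnn _)
    rw [show (0:ℕ)+1 = 1 from rfl, hf1] at this
    exact this
  · rw [Summable.tsum_eq_zero_add hsum1, show (0:ℕ)+1 = 1 from rfl, hf1]
    have htail : ∑' n, f (n+1+1) ≤ ∑' n : ℕ, 648*q^6*(9*q^4)^n := by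
      apply Summable.tsum_le_tsum _ hsum2 ((summable_geometric_of_lt_one (by positivity)
        (by nlinarith)).mul_left _)
      intro n
      simp only [hf]
      rw [show -π * y * (((n+1+1:ℕ):ℝ)^2 + ((n+1+1:ℕ):ℝ)) =
        -π * y * ((((n+1+1:ℕ)):ℝ)^2 + (((n+1+1:ℕ)):ℝ)) from rfl, exp_b_eq_qpow (n+1+1)]
      have hm2 : (2:ℕ) ≤ n+1+1 := by omega
      set B : ℝ := ((n+1+1:ℕ):ℝ)^2 + ((n+1+1:ℕ):ℝ) with hB
      have hB1 : (1:ℝ) ≤ B := by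
        simp only [hB]; push_cast; nlinarith [Nat.cast_nonneg (α := ℝ) n]
      have ha : B^j ≤ B^3 := pow_le_pow_right₀ hB1 hj
      have hBle : B ≤ 2*((n:ℝ)+2)^2 := by
        simp only [hB]; push_cast; nlinarith [Nat.cast_nonneg (α := ℝ) n]
      have hb : B^3 ≤ 8*((n:ℝ)+2)^6 := by
        calc B^3 ≤ (2*((n:ℝ)+2)^2)^3 := pow_le_pow_left₀ (by linarith) hBle 3
        _ = 8*((n:ℝ)+2)^6 := by ring
      have hc : ((n:ℝ)+2)^6 ≤ (9:ℝ)^(n+2) := by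
        have := six_pow_le (n+2) (by omega)
        have hcast : (((n+2)^6 : ℕ) : ℝ) ≤ (((9:ℕ)^(n+2) : ℕ) : ℝ) := by exact_mod_cast this
        push_cast at hcast
        convert hcast using 2 <;> push_cast <;> ring
      have hd : q ^ ((n+1+1)^2 + (n+1+1)) ≤ q ^ (4*n+6) := by
        apply pow_le_pow_of_le_one hq0.le hq1
        have hexp : (n+1+1)^2 + (n+1+1) = n^2+5*n+6 := by ring
        omega
      calc B^j * q ^ ((n+1+1)^2 + (n+1+1))
          ≤ (8*(9:ℝ)^(n+2)) * q ^ (4*n+6) := by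
            apply mul_le_mul (ha.trans (hb.trans (by nlinarith [pow_nonneg (by norm_num : (0:ℝ) ≤ 9) (n+2)]))) hd
              (pow_nonneg hq0.le _) (by positivity)
      _ = 648*q^6*(9*q^4)^n := by
            rw [pow_add (9:ℝ) n 2, pow_add q (4*n) 6, pow_mul, mul_pow]
            ring
    have hgeom : ∑' n : ℕ, 648*q^6*(9*q^4)^n = 648*q^6 * (1 - 9*q^4)⁻¹ := by
      rw [tsum_mul_left, tsum_geometric_of_lt_one (by positivity) (by nlinarith)]
    have hinv : (1 - 9*q^4)⁻¹ ≤ 650/648 := by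
      rw [inv_le_comm₀ (by nlinarith) (by norm_num)]
      nlinarith
    have : 648*q^6 * (1 - 9*q^4)⁻¹ ≤ 650 * q^6 := by
      calc 648*q^6 * (1 - 9*q^4)⁻¹ ≤ 648*q^6 * (650/648) := by
            apply mul_le_mul_of_nonneg_left hinv (by positivity)
      _ = 650 * q^6 := by ring
    nlinarith [htail, hgeom]

set_option maxHeartbeats 1600000 in
lemma core {q s0 s1 s2 s3 P : ℝ} (hq0 : 0 < q) (hq : q ≤ 1/20) (hP : 3 ≤ P)
    (h0l : q^2 ≤ s0) (h0u : s0 ≤ q^2 + 650*q^6)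
    (h1l : 2*q^2 ≤ s1) (h1u : s1 ≤ 2*q^2 + 650*q^6)
    (h2l : 4*q^2 ≤ s2) (h2u : s2 ≤ 4*q^2 + 650*q^6)
    (h3l : 8*q^2 ≤ s3) (h3u : s3 ≤ 8*q^2 + 650*q^6) :
    0 < 2*(1+s0)*(s1^2 - s2*(1+s0)) + P*(2*s1^3 - 3*s2*s1*(1+s0) + s3*(1+s0)^2) := by
  have hQ0 : 0 < q^2 := by positivity
  have hq2 : q^2 ≤ 1/400 := by nlinarith
  have hq6 : 650*q^6 ≤ q^2/240 := by
    nlinarith [mul_le_mul_of_nonneg_right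
      (mul_le_mul_of_nonneg_right hq2 hQ0.le) hQ0.le, hQ0]
  have h0u' : s0 ≤ q^2 + q^2/240 := by linarith
  have h1u' : s1 ≤ 2*q^2 + q^2/240 := by linarith
  have h2u' : s2 ≤ 4*q^2 + q^2/240 := by linarith
  have hu1 : 1 + s0 ≤ 101/100 := by linarith
  have hul : (1:ℝ) ≤ 1 + s0 := by linarith
  have hs1u : s1 ≤ (21/10)*q^2 := by linarith
  have hs2u : s2 ≤ (41/10)*q^2 := by linarith
  have hs1l' : (0:ℝ) ≤ s1 := by linarith
  have hs2l' : (0:ℝ) ≤ s2 := by linarith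
  have hs3l' : (0:ℝ) ≤ s3 := by linarith
  have hq22 : q^2*q^2 ≤ (1/400)*q^2 := mul_le_mul_of_nonneg_right hq2 hQ0.le
  -- quadratic part
  have p1 : s2*(1+s0) ≤ (41/10)*q^2*(101/100) :=
    mul_le_mul hs2u hu1 (by linarith) (by positivity)
  have hXu : s2*(1+s0) - s1^2 ≤ (415/100)*q^2 := by
    nlinarith [sq_nonneg s1, p1]
  have hA : 2*(1+s0)*(s2*(1+s0) - s1^2) ≤ 9*q^2 := by
    nlinarith [mul_nonneg (by linarith : (0:ℝ) ≤ 1+s0-1)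
        (by linarith : (0:ℝ) ≤ (415/100)*q^2 - (s2*(1+s0) - s1^2)),
      mul_nonneg (by linarith : (0:ℝ) ≤ 101/100 - (1+s0)) hQ0.le, hXu, hQ0]
  -- cubic part
  have t1 : 8*q^2*1 ≤ s3*(1+s0)^2 := by
    apply mul_le_mul h3l _ (by norm_num) hs3l'
    nlinarith
  have t2a : s2*s1 ≤ ((41/10)*q^2)*((21/10)*q^2) :=
    mul_le_mul hs2u hs1u hs1l' (by positivity)
  have t2b : s2*s1*(1+s0) ≤ (((41/10)*q^2)*((21/10)*q^2))*(101/100) :=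
    mul_le_mul t2a hu1 (by linarith) (by positivity)
  have t2 : 3*(s2*s1*(1+s0)) ≤ q^2 := by nlinarith [t2b, hq22]
  have t3 : (0:ℝ) ≤ 2*s1^3 := by positivity
  have hB : 7*q^2 ≤ 2*s1^3 - 3*s2*s1*(1+s0) + s3*(1+s0)^2 := by
    nlinarith [t1, t2, t3]
  have hBnn : (0:ℝ) ≤ 2*s1^3 - 3*s2*s1*(1+s0) + s3*(1+s0)^2 := by linarith
  have hPB : 3*(2*s1^3 - 3*s2*s1*(1+s0) + s3*(1+s0)^2) ≤
      P*(2*s1^3 - 3*s2*s1*(1+s0) + s3*(1+s0)^2) :=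
    mul_le_mul_of_nonneg_right hP hBnn
  have hneg : 2*(1+s0)*(s1^2 - s2*(1+s0)) = -(2*(1+s0)*(s2*(1+s0) - s1^2)) := by ring
  rw [hneg]
  nlinarith [hA, hB, hPB, hQ0]

end T2test

theorem theta2_combination_pos (y : ℝ) (hy : 1 ≤ y) :
    0 < 2 * y ^ ((9 : ℝ) / 2) * deriv theta2 y ^ 2 * theta2 y -
        2 * y ^ ((9 : ℝ) / 2) * iteratedDeriv 2 theta2 y * theta2 y ^ 2 -
        2 * y ^ ((11 : ℝ) / 2) * deriv theta2 y ^ 3 +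
        3 * y ^ ((11 : ℝ) / 2) * iteratedDeriv 2 theta2 y * deriv theta2 y * theta2 y -
        y ^ ((11 : ℝ) / 2) * iteratedDeriv 3 theta2 y * theta2 y ^ 2 := by
  have hy0 : (0:ℝ) < y := by linarith
  have hy2 : (1:ℝ)/2 < y := by linarith
  obtain ⟨s0, e0, l0, u0⟩ := T2test.Sg_decomp 0 (by norm_num) hy
  obtain ⟨s1, e1, l1, u1⟩ := T2test.Sg_decomp 1 (by norm_num) hy
  obtain ⟨s2, e2, l2, u2⟩ := T2test.Sg_decomp 2 (by norm_num) hy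
  obtain ⟨s3, e3, l3, u3⟩ := T2test.Sg_decomp 3 (by norm_num) hy
  norm_num at e0 e1 e2 e3 l0 u0 l1 u1 l2 u2 l3 u3
  have hq0 : (0:ℝ) < Real.exp (-(π*y)) := Real.exp_pos _
  have hq20 : Real.exp (-(π*y)) ≤ 1/20 := T2test.q_le_20 hy
  have hP : (3:ℝ) ≤ π*y := by
    nlinarith [Real.pi_gt_three, mul_le_mul_of_nonneg_left hy Real.pi_pos.le]
  have key := T2test.core hq0 hq20 hP l0 u0 l1 u1 l2 u2 l3 u3
  have h0 : theta2 y = 2 * (Real.exp (-π*y/4) * T2test.Sg 0 y) := by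
    rw [T2test.theta2_eq_G, T2test.G_eq_two_mul 0 hy, T2test.natSum0 hy]
  have h1 : deriv theta2 y = 2 * ((-π) * Real.exp (-π*y/4) *
      (T2test.Sg 1 y + (1/4) * T2test.Sg 0 y)) := by
    rw [T2test.deriv_theta2 hy2, T2test.G_eq_two_mul 1 hy, T2test.natSum1 hy]
  have h2 : iteratedDeriv 2 theta2 y = 2 * (π^2 * Real.exp (-π*y/4) *
      (T2test.Sg 2 y + (1/2) * T2test.Sg 1 y + (1/16) * T2test.Sg 0 y)) := by
    rw [T2test.iteratedDeriv_two hy2, T2test.G_eq_two_mul 2 hy, T2test.natSum2 hy]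
  have h3 : iteratedDeriv 3 theta2 y = 2 * ((-π^3) * Real.exp (-π*y/4) *
      (T2test.Sg 3 y + (3/4) * T2test.Sg 2 y + (3/16) * T2test.Sg 1 y + (1/64) * T2test.Sg 0 y)) := by
    rw [T2test.iteratedDeriv_three hy2, T2test.G_eq_two_mul 3 hy, T2test.natSum3 hy]
  have hsplit : y ^ ((11:ℝ)/2) = y ^ ((9:ℝ)/2) * y := by
    rw [show (11:ℝ)/2 = 9/2 + 1 by norm_num, Real.rpow_add hy0, Real.rpow_one]
  have hpos : 0 < y ^ ((9:ℝ)/2) * ((8*π^2*Real.exp (-π*y/4)^3) *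
      (2*(1+s0)*(s1^2 - s2*(1+s0)) + (π*y)*(2*s1^3 - 3*s2*s1*(1+s0) + s3*(1+s0)^2))) :=
    mul_pos (Real.rpow_pos_of_pos hy0 _) (mul_pos (by positivity) key)
  rw [h0, h1, h2, h3, hsplit, e0, e1, e2, e3]
  refine lt_of_lt_of_eq hpos ?_
  ring
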